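/- Let f : ℝ^d → ℝ be continuously differentiable with ∇f being M-Lipschitz, and suppose m := liminf_{‖x‖→∞} ⟨∇f(x), x⟩/‖x‖² satisfies 0 < m < ∞. Then for every y ∈ ℝ^d and every m' < m, there exists a constant c(y) ≥ 0 such that ⟨∇f(x) − ∇f(y), x − y⟩ ≥ m'‖x − y‖² − c(y) for all x ∈ ℝ^d. -/

import Mathlib

open scoped RealInnerProductSpace

open Filter

set_option maxHeartbeats 1000000 in
/-- Under Lipschitz gradient and positive finite tail-liminf `m`,
for every `y` and `m' < m` there is `c ≥ 0` with
`⟪∇f x − ∇f y, x − y⟫ ≥ m'‖x − y‖² − c` for all `x`. -/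
theorem stmt_0 {d : ℕ} (f : EuclideanSpace ℝ (Fin d) → ℝ) (M : ℝ)
    (hf : ContDiff ℝ 1 f)
    (hLip : ∀ x y : EuclideanSpace ℝ (Fin d),
      ‖gradient f x - gradient f y‖ ≤ M * ‖x - y‖)
    (m : ℝ)
    (hm : m = Filter.liminf
      (fun x : EuclideanSpace ℝ (Fin d) => ⟪gradient f x, x⟫ / ‖x‖ ^ 2)
      (Filter.comap (fun x : EuclideanSpace ℝ (Fin d) => ‖x‖) Filter.atTop))
    (hmpos : 0 < m) :
    ∀ y : EuclideanSpace ℝ (Fin d), ∀ m' < m, ∃ c : ℝ, 0 ≤ c ∧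
      ∀ x : EuclideanSpace ℝ (Fin d),
        ⟪gradient f x - gradient f y, x - y⟫ ≥ m' * ‖x - y‖ ^ 2 - c := by
  set g := gradient f with hg_def
  -- continuity of the gradient
  have hgcont : Continuous g := by
    rw [continuous_iff_continuousAt]
    intro z
    have h0 : Tendsto (fun x => g x - g z) (nhds z) (nhds 0) := by
      apply squeeze_zero_norm (fun x => hLip x z)
      have : Tendsto (fun x : EuclideanSpace ℝ (Fin d) => M * ‖x - z‖)
          (nhds z) (nhds (M * ‖z - z‖)) :=
        (continuous_const.mul ((continuous_id.sub continuous_const).norm)).tendsto z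
      simpa using this
    have := h0.add (tendsto_const_nhds (x := g z))
    simp at this; exact this
  intro y m' hm'
  -- reduce to the case 0 ≤ m'
  set m₀ : ℝ := max m' 0 with hm₀def
  have hm₀nonneg : 0 ≤ m₀ := le_max_right _ _
  have hm₀lt : m₀ < m := max_lt hm' hmpos
  have hm'le : m' ≤ m₀ := le_max_left _ _
  set m₁ : ℝ := (m₀ + m) / 2 with hm₁def
  have hm₁lt : m₁ < m := by rw [hm₁def]; linarith
  have ha : 0 < m₁ - m₀ := by rw [hm₁def]; linarith
  set F := Filter.comap (fun x : EuclideanSpace ℝ (Fin d) => ‖x‖) Filter.atTop with hF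
  have hone : ∀ᶠ x : EuclideanSpace ℝ (Fin d) in F, 1 ≤ ‖x‖ :=
    (Filter.eventually_ge_atTop (1:ℝ)).comap (fun x : EuclideanSpace ℝ (Fin d) => ‖x‖)
  have hbdd : F.IsBoundedUnder (· ≥ ·)
      (fun x : EuclideanSpace ℝ (Fin d) => ⟪g x, x⟫ / ‖x‖ ^ 2) := by
    refine ⟨-(‖g 0‖ + |M|), Filter.eventually_map.mpr ?_⟩
    filter_upwards [hone] with x hx
    have hxpos : (0:ℝ) < ‖x‖ := lt_of_lt_of_le one_pos hx
    have ht : (0:ℝ) < ‖x‖ ^ 2 := by positivity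
    simp only [ge_iff_le]
    rw [le_div_iff₀ ht]
    have h1 : ‖g x‖ ≤ ‖g 0‖ + |M| * ‖x‖ := by
      have h0 := hLip x 0
      have h2 : ‖g x‖ - ‖g 0‖ ≤ ‖g x - g 0‖ := norm_sub_norm_le _ _
      have h3 : M * ‖x - 0‖ ≤ |M| * ‖x‖ := by
        rw [sub_zero]
        exact mul_le_mul_of_nonneg_right (le_abs_self M) (norm_nonneg x)
      linarith
    have h5 := abs_le.mp (abs_real_inner_le_norm (g x) x)
    have h6 : ‖g x‖ * ‖x‖ ≤ (‖g 0‖ + |M| * ‖x‖) * ‖x‖ :=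
      mul_le_mul_of_nonneg_right h1 hxpos.le
    have h8 : ‖x‖ ≤ ‖x‖ ^ 2 := by nlinarith
    have h7 : ‖g 0‖ * ‖x‖ ≤ ‖g 0‖ * ‖x‖ ^ 2 :=
      mul_le_mul_of_nonneg_left h8 (norm_nonneg (g 0))
    nlinarith
  -- extract the eventual lower bound from the liminf
  have hev : ∀ᶠ x : EuclideanSpace ℝ (Fin d) in F, m₁ < ⟪g x, x⟫ / ‖x‖ ^ 2 := by
    apply Filter.eventually_lt_of_lt_liminf _ hbdd
    rw [← hm]; exact hm₁lt
  obtain ⟨R, hR⟩ := Filter.eventually_atTop.mp (Filter.eventually_comap.mp (hev.and hone))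
  set R' : ℝ := max R 1 with hR'def
  have hR'pos : (0:ℝ) < R' := lt_of_lt_of_le one_pos (le_max_right _ _)
  -- lower bound for large x
  have hlarge : ∀ x : EuclideanSpace ℝ (Fin d), R' ≤ ‖x‖ → m₁ * ‖x‖ ^ 2 ≤ ⟪g x, x⟫ := by
    intro x hx
    have h0 := (hR ‖x‖ (le_trans (le_max_left _ _) hx) x rfl).1
    have hxpos : (0:ℝ) < ‖x‖ := lt_of_lt_of_le hR'pos hx
    have ht : (0:ℝ) < ‖x‖ ^ 2 := by positivity
    exact le_of_lt ((lt_div_iff₀ ht).mp h0)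
  -- constants
  set K : ℝ := ‖g y‖ with hK
  set L : ℝ := |M| with hL
  set s : ℝ := ‖y‖ with hs
  have hK0 : 0 ≤ K := norm_nonneg _
  have hL0 : 0 ≤ L := abs_nonneg _
  have hs0 : 0 ≤ s := norm_nonneg _
  set c₂ : ℝ := (L * s + K + 2 * m₀ * s) ^ 2 / (4 * (m₁ - m₀))
      + (2 * K * s + L * s ^ 2 + m₀ * s ^ 2) with hc₂
  have hc₂0 : 0 ≤ c₂ := by positivity
  -- the function h
  set h : EuclideanSpace ℝ (Fin d) → ℝ :=
    fun x => ⟪g x - g y, x - y⟫ - m₀ * ‖x - y‖ ^ 2 with hh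
  have hhcont : Continuous h := by
    apply Continuous.sub
    · exact (hgcont.sub continuous_const).inner (continuous_id.sub continuous_const)
    · exact continuous_const.mul (((continuous_id.sub continuous_const).norm).pow 2)
  -- minimum on the ball
  obtain ⟨x₀, hx₀mem, hx₀min⟩ :=
    (isCompact_closedBall (0:EuclideanSpace ℝ (Fin d)) R').exists_isMinOn
    ⟨0, Metric.mem_closedBall_self hR'pos.le⟩ hhcont.continuousOn
  refine ⟨max (-(h x₀)) c₂, le_trans hc₂0 (le_max_right _ _), ?_⟩
  intro x
  have key : h x ≥ -(max (-(h x₀)) c₂) := by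
    by_cases hx : ‖x‖ ≤ R'
    · have hxm : x ∈ Metric.closedBall (0:EuclideanSpace ℝ (Fin d)) R' := by
        rwa [Metric.mem_closedBall, dist_zero_right]
      have h0 := hx₀min hxm
      have h2 : -(h x₀) ≤ max (-(h x₀)) c₂ := le_max_left _ _
      simp only [Set.mem_setOf_eq] at h0
      linarith
    · push_neg at hx
      have hxR : R' ≤ ‖x‖ := hx.le
      have h1 := hlarge x hxR
      set t : ℝ := ‖x‖ with htd
      have ht1 : 1 ≤ t := le_trans (le_max_right _ _) hxR
      have hgx : ‖g x‖ ≤ K + L * t + L * s := by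
        have h2 := hLip x y
        have h3 : ‖g x‖ - ‖g y‖ ≤ ‖g x - g y‖ := norm_sub_norm_le _ _
        have h4 : M * ‖x - y‖ ≤ L * ‖x - y‖ :=
          mul_le_mul_of_nonneg_right (le_abs_self M) (norm_nonneg _)
        have h5 : ‖x - y‖ ≤ t + s := norm_sub_le x y
        have h6 : L * ‖x - y‖ ≤ L * (t + s) := mul_le_mul_of_nonneg_left h5 hL0
        linarith
      have hxy : ‖x - y‖ ≤ t + s := norm_sub_le x y
      have hxy0 : 0 ≤ ‖x - y‖ := norm_nonneg _
      have e1 := abs_le.mp (abs_real_inner_le_norm (g x) y)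
      have e2 := abs_le.mp (abs_real_inner_le_norm (g y) x)
      have e3 := abs_le.mp (abs_real_inner_le_norm (g y) y)
      have hs1 : ‖g x‖ * s ≤ (K + L * t + L * s) * s :=
        mul_le_mul_of_nonneg_right hgx hs0
      have hexp : ⟪g x - g y, x - y⟫
          = ⟪g x, x⟫ - ⟪g x, y⟫ - ⟪g y, x⟫ + ⟪g y, y⟫ := by
        simp [inner_sub_left, inner_sub_right]; ring
      have hsq : m₀ * ‖x - y‖ ^ 2 ≤ m₀ * (t + s) ^ 2 := by
        apply mul_le_mul_of_nonneg_left _ hm₀nonneg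
        nlinarith
      have hquad : (m₁ - m₀) * t ^ 2 - (L * s + K + 2 * m₀ * s) * t
          - (2 * K * s + L * s ^ 2 + m₀ * s ^ 2) ≥ -c₂ := by
        rw [hc₂]
        have hD : (L * s + K + 2 * m₀ * s) ^ 2 = 4 * (m₁ - m₀) *
            ((L * s + K + 2 * m₀ * s) ^ 2 / (4 * (m₁ - m₀))) := by
          field_simp
        nlinarith [sq_nonneg (2 * (m₁ - m₀) * t - (L * s + K + 2 * m₀ * s)), ha, hD]
      have hmono : -(max (-(h x₀)) c₂) ≤ -c₂ := by
        simp only [neg_le_neg_iff]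
        exact le_max_right _ _
      rw [hh]
      simp only
      rw [hexp]
      linarith [e1.1, e2.1, e3.1]
  have hineq : m' * ‖x - y‖ ^ 2 ≤ m₀ * ‖x - y‖ ^ 2 :=
    mul_le_mul_of_nonneg_right hm'le (sq_nonneg _)
  rw [hh] at key
  simp only at key
  linarith
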